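/- Let n = m² for a natural number m ≥ 1, and suppose the string aⁿ (the character a repeated n times) is written as a concatenation s_{p(1)} s_{p(2)} ⋯ s_{p(k')} of k' strings drawn from a finite dictionary s₁, ..., s_k of nonempty strings with total length s = Σᵢ |sᵢ|. Then k' + s ≥ 2m = 2√n. -/

import Mathlib

/-- If the string `aⁿ` with `n = m²` (`m ≥ 1`) is a concatenation of `k'`
strings selected (via `p`) from a dictionary of `k` nonempty strings of total length
`s = Σᵢ |sᵢ|`, then `k' + s ≥ 2m = 2√n`. -/
theorem pfp_lower_bound {α : Type*} (a : α) (m k k' : ℕ) (hm : 1 ≤ m)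
    (s : Fin k → List α) (hs : ∀ i, s i ≠ [])
    (p : Fin k' → Fin k)
    (hcat : (List.ofFn (fun i => s (p i))).flatten = List.replicate (m ^ 2) a) :
    2 * m ≤ k' + ∑ i, (s i).length := by
  set S := ∑ i, (s i).length with hS
  have hlen : ∑ i : Fin k', (s (p i)).length = m ^ 2 := by
    have := congrArg List.length hcat
    simpa [List.length_flatten, List.sum_ofFn] using this
  have hbound : ∀ i : Fin k', (s (p i)).length ≤ S := fun i =>
    Finset.single_le_sum (f := fun j => (s j).length) (fun _ _ => Nat.zero_le _)
      (Finset.mem_univ (p i))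
  have hmul : m ^ 2 ≤ k' * S := by
    calc m ^ 2 = ∑ i : Fin k', (s (p i)).length := hlen.symm
    _ ≤ ∑ _i : Fin k', S := Finset.sum_le_sum fun i _ => hbound i
    _ = k' * S := by simp [Finset.sum_const, mul_comm]
  nlinarith [sq_nonneg (k' - S : ℤ), sq_nonneg (S - k' : ℤ), hmul, hm]
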